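/- Let G be a graph on [n] that has the interval property with respect to its labeling, let H = in_lex(G), and let M be an induced matching of H containing three edges {x_{i_s}, y_{j_s}}, {x_{i_{s+1}}, y_{j_{s+1}}}, {x_{i_{s+2}}, y_{j_{s+2}}} with i_s < j_s ≤ i_{s+1} < j_{s+1} ≤ i_{s+2}. Then {i_s, i_{s+2}} is not an edge of G; in particular the vertices i_s, i_{s+1}, i_{s+2} do not lie in a common clique of G. -/

import Mathlib

open SimpleGraph

/-- `G` has the interval property with respect to its labeling: for every edge `{i,j}`
with `i < j`, every pair `{k,l}` with `i ≤ k < l ≤ j` is an edge of `G`. -/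
def HasIntervalProperty {n : ℕ} (G : SimpleGraph (Fin n)) : Prop :=
  ∀ i j k l : Fin n, G.Adj i j → i < j → i ≤ k → k < l → l ≤ j → G.Adj k l

/-- The bipartite graph `in_lex(G)` on `{x_1,…,x_n} ∪ {y_1,…,y_n}` (here `Sum.inl i = x_i`,
`Sum.inr j = y_j`) whose edges are the pairs `{x_i, y_j}` with `i < j` and `{i,j} ∈ E(G)`. -/
def inLex {n : ℕ} (G : SimpleGraph (Fin n)) : SimpleGraph (Fin n ⊕ Fin n) :=
  SimpleGraph.fromRel (fun u v =>
    ∃ i j : Fin n, i < j ∧ G.Adj i j ∧ u = Sum.inl i ∧ v = Sum.inr j)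

/-- `M` is an induced matching of `H`: a set of edges of `H`, pairwise vertex-disjoint,
such that no edge of `H` joins two vertices lying in distinct edges of `M`. -/
def IsInducedMatching {V : Type*} (H : SimpleGraph V) (M : Set (Sym2 V)) : Prop :=
  M ⊆ H.edgeSet ∧
  (∀ e ∈ M, ∀ f ∈ M, e ≠ f → ∀ v, v ∈ e → v ∉ f) ∧
  (∀ e ∈ M, ∀ f ∈ M, e ≠ f → ∀ u ∈ e, ∀ v ∈ f, ¬ H.Adj u v)

/-- An indexed family of `m` pairwise distinct edges forming an induced matching of `H`. -/
def IsInducedMatchingFamily {V : Type*} (H : SimpleGraph V) {m : ℕ} (f : Fin m → Sym2 V) : Prop :=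
  Function.Injective f ∧ IsInducedMatching H (Set.range f)

/-- `p` is an induced path of length `l` in `G`: `l+1` distinct vertices such that the edges
of `G` among them are exactly the consecutive pairs. -/
def IsInducedPath {V : Type*} (G : SimpleGraph V) (l : ℕ) (p : Fin (l + 1) → V) : Prop :=
  Function.Injective p ∧
  ∀ a b : Fin (l + 1), G.Adj (p a) (p b) ↔ ((a : ℕ) + 1 = b ∨ (b : ℕ) + 1 = a)

/-- `c` is an induced cycle of length `k` in `H`: `k` distinct vertices such that the edges
of `H` among them are exactly the consecutive pairs (cyclically). -/
def IsInducedCycle {V : Type*} (H : SimpleGraph V) (k : ℕ) (c : Fin k → V) : Prop :=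
  3 ≤ k ∧ Function.Injective c ∧
  ∀ a b : Fin k, H.Adj (c a) (c b) ↔ (((a : ℕ) + 1) % k = b ∨ ((b : ℕ) + 1) % k = a)

/-- Condition (∗) for an induced matching `{x_{i t}, y_{j t}}` of `in_lex(G)`: for every
index `a` and vertex `t < i a` with `{t, j a} ∈ E(G)`, replacing `x_{i a}` by `x_t`
does not yield an induced matching of `in_lex(G)`. -/
def CondStar {n m : ℕ} (G : SimpleGraph (Fin n)) (i j : Fin m → Fin n) : Prop :=
  ∀ a : Fin m, ∀ t : Fin n, t < i a → G.Adj t (j a) →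
    ¬ IsInducedMatchingFamily (inLex G)
        (fun u => if u = a then s(Sum.inl t, Sum.inr (j u))
                  else s(Sum.inl (i u), Sum.inr (j u)))

/-- If an induced matching `M` of `in_lex(G)` contains three edges `{x_a, y_b}`,
`{x_{a'}, y_{b'}}`, `{x_{a''}, y_{b''}}` with `a < b ≤ a' < b' ≤ a''` and `G` has the
interval property, then `{a, a''} ∉ E(G)`; in particular `a, a', a''` do not lie in a
common clique of `G`. -/
theorem stmt_9 {n : ℕ} (G : SimpleGraph (Fin n)) (hG : HasIntervalProperty G)
    (M : Set (Sym2 (Fin n ⊕ Fin n))) (hM : IsInducedMatching (inLex G) M)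
    (a b a' b' a'' b'' : Fin n)
    (h1 : s(Sum.inl a, Sum.inr b) ∈ M) (h2 : s(Sum.inl a', Sum.inr b') ∈ M)
    (h3 : s(Sum.inl a'', Sum.inr b'') ∈ M)
    (hab : a < b) (hba' : b ≤ a') (ha'b' : a' < b') (hb'a'' : b' ≤ a'') :
    ¬ G.Adj a a'' ∧ ¬ ∃ C : Set (Fin n), G.IsClique C ∧ a ∈ C ∧ a' ∈ C ∧ a'' ∈ C := by
  have haa' : a < a' := lt_of_lt_of_le hab hba'
  have hab' : a < b' := lt_trans haa' ha'b'
  have key : ¬ G.Adj a a'' := by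
    intro hadj
    have haa'' : a < a'' := lt_of_lt_of_le hab' hb'a''
    have hGab' : G.Adj a b' := hG a a'' a b' hadj haa'' le_rfl hab' hb'a''
    have hne : s(Sum.inl a, Sum.inr b) ≠ (s(Sum.inl a', Sum.inr b') : Sym2 (Fin n ⊕ Fin n)) := by
      intro h
      rw [Sym2.eq_iff] at h
      rcases h with ⟨h', _⟩ | ⟨h', _⟩
      · exact absurd (Sum.inl.inj h') (ne_of_lt haa')
      · exact nomatch h'
    have hadjH : (inLex G).Adj (Sum.inl a) (Sum.inr b') := by
      refine ⟨by simp, Or.inl ⟨a, b', hab', hGab', rfl, rfl⟩⟩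
    exact hM.2.2 _ h1 _ h2 hne (Sum.inl a) (by simp) (Sum.inr b') (by simp) hadjH
  refine ⟨key, ?_⟩
  rintro ⟨C, hC, haC, _, ha''C⟩
  exact key (hC haC ha''C (ne_of_lt (lt_of_lt_of_le hab' hb'a'')))
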